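/- Let T be a cyclic F_q-linear endomorphism of F_q^n with minimal polynomial p_T = f_1^{e_1} ... f_k^{e_k}, where f_i are distinct monic irreducibles of degree n_i. Then the number of 1-dimensional F_q-subspaces W with F_q^n = W ⊕ T(W) ⊕ ... ⊕ T^{n-1}(W) equals (q^n / (q-1)) * prod_{i=1}^k (1 - q^{-n_i}). -/

import Mathlib

open Polynomial Module Submodule

namespace Stmt19Aux

/-- The polynomial with coefficients `c : Fin m → F`. -/
noncomputable def Pc {F : Type*} [Semiring F] (m : ℕ) (c : Fin m → F) : F[X] :=
  ∑ i : Fin m, monomial (i : ℕ) (c i)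

theorem degree_Pc_lt {F : Type*} [Semiring F] (m : ℕ) (c : Fin m → F) :
    (Pc m c).degree < (m : ℕ) := by
  refine lt_of_le_of_lt (degree_sum_le _ _) ((Finset.sup_lt_iff ?_).mpr ?_)
  · exact_mod_cast WithBot.bot_lt_coe m
  · intro i _
    exact lt_of_le_of_lt (degree_monomial_le _ _) (by exact_mod_cast i.isLt)

theorem coeff_Pc {F : Type*} [Semiring F] (m : ℕ) (c : Fin m → F) (i : Fin m) :
    (Pc m c).coeff (i : ℕ) = c i := by
  rw [Pc, finset_sum_coeff, Finset.sum_eq_single i]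
  · simp [coeff_monomial]
  · intro j _ hj
    rw [coeff_monomial, if_neg (fun h => hj (Fin.ext h))]
  · simp

theorem Pc_eq {F : Type*} [Semiring F] (m : ℕ) (x : F[X]) (hx : x.degree < (m : ℕ)) :
    Pc m (fun i : Fin m => x.coeff i) = x := by
  by_cases h0 : x = 0
  · subst h0; simp [Pc]
  · have hnd : x.natDegree < m := (natDegree_lt_iff_degree_lt h0).mpr hx
    conv_rhs => rw [x.as_sum_range' m hnd]
    rw [Pc, Fin.sum_univ_eq_sum_range (fun i => monomial i (x.coeff i))]

variable {F V : Type*} [Field F] [AddCommGroup V] [Module F V]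

theorem aeval_Pc (T : V →ₗ[F] V) (m : ℕ) (c : Fin m → F) (w : V) :
    (aeval T (Pc m c)) w = ∑ i : Fin m, c i • (T ^ (i : ℕ)) w := by
  rw [Pc, map_sum, LinearMap.sum_apply]
  refine Finset.sum_congr rfl fun i _ => ?_
  rw [aeval_monomial, Module.End.mul_apply, Module.algebraMap_end_apply]

theorem cyc_iff_li {n : ℕ} (hn : 0 < n) (hdim : finrank F V = n) (T : V →ₗ[F] V) (w : V) :
    span F (Set.range fun i : Fin n => (T ^ (i : ℕ)) w) = ⊤ ↔
      LinearIndependent F (fun i : Fin n => (T ^ (i : ℕ)) w) := by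
  constructor
  · intro h
    have hb := coe_basisOfTopLeSpanOfCardEqFinrank (fun i : Fin n => (T ^ (i : ℕ)) w)
      (le_of_eq h.symm) (by simp [hdim])
    have hli := (basisOfTopLeSpanOfCardEqFinrank (fun i : Fin n => (T ^ (i : ℕ)) w)
      (le_of_eq h.symm) (by simp [hdim])).linearIndependent
    rwa [hb] at hli
  · intro h
    haveI : Nonempty (Fin n) := ⟨⟨0, hn⟩⟩
    exact h.span_eq_top_of_card_eq_finrank (by simp [hdim])

theorem cyc_iff_poly {n : ℕ} (hn : 0 < n) (hdim : finrank F V = n) (T : V →ₗ[F] V) (w : V) :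
    span F (Set.range fun i : Fin n => (T ^ (i : ℕ)) w) = ⊤ ↔
      ∀ x : F[X], x.degree < (n : ℕ) → (aeval T x) w = 0 → x = 0 := by
  rw [cyc_iff_li hn hdim T w, Fintype.linearIndependent_iff]
  constructor
  · intro H x hxdeg hx
    have hsum : ∑ i : Fin n, x.coeff (i : ℕ) • (T ^ (i : ℕ)) w = 0 := by
      rw [← aeval_Pc, Pc_eq n x hxdeg, hx]
    have hc := H (fun i : Fin n => x.coeff (i : ℕ)) hsum
    rw [← Pc_eq n x hxdeg, Pc]
    refine Finset.sum_eq_zero fun i _ => ?_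
    have hc' : x.coeff (i : ℕ) = 0 := hc i
    rw [hc', monomial_zero_right]
  · intro H c hsum i
    have h1 : (aeval T (Pc n c)) w = 0 := by rw [aeval_Pc]; exact hsum
    have h2 := H (Pc n c) (degree_Pc_lt n c) h1
    have h3 := coeff_Pc n c i
    rw [h2] at h3
    simpa using h3.symm

theorem card_ker [Fintype F] (T : V →ₗ[F] V) (v₀ : V)
    (hsur : ∀ w : V, ∃ u : F[X], (aeval T u) v₀ = w)
    (h s : F[X]) (hmon : h.Monic) (hs : s ≠ 0)
    (hann : ∀ x : F[X], (aeval T x) v₀ = 0 ↔ s * h ∣ x) :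
    Nat.card (LinearMap.ker (aeval T h)) = Fintype.card F ^ h.natDegree := by
  classical
  set m := h.natDegree with hm
  have haeval_mul : ∀ (a b : F[X]) (w : V), (aeval T (a * b)) w = (aeval T a) ((aeval T b) w) :=
    fun a b w => by rw [map_mul]; rfl
  have hmem : ∀ c : Fin m → F, (aeval T (s * Pc m c)) v₀ ∈ LinearMap.ker (aeval T h) := by
    intro c
    rw [LinearMap.mem_ker, ← haeval_mul]
    exact (hann _).mpr ⟨Pc m c, by ring⟩
  set β : (Fin m → F) → LinearMap.ker (aeval T h) := fun c => ⟨_, hmem c⟩ with hβ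
  have hβinj : Function.Injective β := by
    intro c c' hcc
    have hval : (aeval T (s * Pc m c)) v₀ = (aeval T (s * Pc m c')) v₀ :=
      congrArg Subtype.val hcc
    have h1 : (aeval T (s * Pc m c - s * Pc m c')) v₀ = 0 := by
      rw [map_sub, LinearMap.sub_apply, sub_eq_zero]; exact hval
    have h2 : s * h ∣ s * (Pc m c - Pc m c') := by
      rw [mul_sub]; exact (hann _).mp h1
    have h3 : h ∣ Pc m c - Pc m c' := (mul_dvd_mul_iff_left hs).mp h2
    have h4 : Pc m c - Pc m c' = 0 := by
      by_contra hne
      have hle := degree_le_of_dvd h3 hne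
      have hlt : (Pc m c - Pc m c').degree < (m : ℕ) :=
        lt_of_le_of_lt (degree_sub_le _ _) (max_lt (degree_Pc_lt _ _) (degree_Pc_lt _ _))
      rw [degree_eq_natDegree hmon.ne_zero] at hle
      exact absurd (lt_of_le_of_lt hle hlt) (lt_irrefl _)
    have h5 : Pc m c = Pc m c' := sub_eq_zero.mp h4
    funext i
    rw [← coeff_Pc m c i, ← coeff_Pc m c' i, h5]
  have hβsur : Function.Surjective β := by
    rintro ⟨x, hx⟩
    obtain ⟨u₀, hu₀⟩ := hsur x
    have h1 : (aeval T (h * u₀)) v₀ = 0 := by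
      rw [haeval_mul, hu₀]; exact LinearMap.mem_ker.mp hx
    have h2 : s ∣ u₀ := by
      have hd := (hann _).mp h1
      rw [mul_comm s h] at hd
      exact (mul_dvd_mul_iff_left hmon.ne_zero).mp hd
    obtain ⟨u, rfl⟩ := h2
    refine ⟨fun i : Fin m => (u %ₘ h).coeff i, ?_⟩
    have hdeg : (u %ₘ h).degree < (m : ℕ) := by
      have hd := degree_modByMonic_lt u hmon
      rwa [degree_eq_natDegree hmon.ne_zero] at hd
    apply Subtype.ext
    show (aeval T (s * Pc m _)) v₀ = x
    rw [Pc_eq m _ hdeg]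
    have h3 : (aeval T (s * u - s * (u %ₘ h))) v₀ = 0 := by
      apply (hann _).mpr
      refine ⟨u /ₘ h, ?_⟩
      have hmd := modByMonic_add_div u h
      calc s * u - s * (u %ₘ h) = s * (u - u %ₘ h) := by ring
        _ = s * (h * (u /ₘ h)) := by rw [eq_sub_of_add_eq' hmd]
        _ = s * h * (u /ₘ h) := by ring
    rw [map_sub, LinearMap.sub_apply, sub_eq_zero] at h3
    rw [← h3, hu₀]
  have hcard : Nat.card (LinearMap.ker (aeval T h)) = Nat.card (Fin m → F) :=
    (Nat.card_congr (Equiv.ofBijective β ⟨hβinj, hβsur⟩)).symm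
  rw [hcard, Nat.card_eq_fintype_card, Fintype.card_fun, Fintype.card_fin]

end Stmt19Aux

open Stmt19Aux in
theorem stmt19 (F V : Type*) [Field F] [Fintype F] [AddCommGroup V] [Module F V]
    (q n : ℕ) (hq : q = Fintype.card F) (hn : 0 < n)
    (hdim : Module.finrank F V = n)
    (T : V →ₗ[F] V)
    (hcyc : ∃ v : V, Submodule.span F (Set.range fun i : Fin n => (T ^ (i : ℕ)) v) = ⊤)
    (k : ℕ) (f : Fin k → Polynomial F) (e : Fin k → ℕ)
    (hf : ∀ i, (f i).Monic ∧ Irreducible (f i)) (hinj : Function.Injective f)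
    (he : ∀ i, 0 < e i)
    (hmin : minpoly F T = ∏ i : Fin k, f i ^ e i) :
    (Nat.card {W : Submodule F V // Module.finrank F W = 1 ∧
        DirectSum.IsInternal (fun i : Fin n => Submodule.map (T ^ (i : ℕ)) W)} : ℚ) =
      (q : ℚ) ^ n / (q - 1) * ∏ i : Fin k, (1 - ((q : ℚ) ^ (f i).natDegree)⁻¹) := by
  classical
  subst hq
  obtain ⟨v₀, hv₀⟩ := hcyc
  -- finiteness
  haveI hFin : Module.Finite F V :=
    ⟨hv₀ ▸ Submodule.fg_span (Set.finite_range _)⟩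
  haveI hVfin : Finite V := Module.finite_of_finite F
  letI : Fintype V := Fintype.ofFinite V
  set P : F[X] := minpoly F T with hP
  have hpmon : P.Monic := by
    rw [hmin]
    exact monic_prod_of_monic _ _ fun i _ => (hf i).1.pow _
  have hp0 : P ≠ 0 := hpmon.ne_zero
  -- degree of the minimal polynomial
  have hdegP : P.natDegree = n := by
    have hle : P.natDegree ≤ n := by
      have hdvd := minpoly.dvd F T (LinearMap.aeval_self_charpoly T)
      have := natDegree_le_of_dvd hdvd (T.charpoly_monic).ne_zero
      rwa [LinearMap.charpoly_natDegree, hdim] at this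
    rcases lt_or_eq_of_le hle with hlt | heq
    · exfalso
      have hdlt : P.degree < (n : ℕ) := (natDegree_lt_iff_degree_lt hp0).mp hlt
      refine hp0 ((cyc_iff_poly hn hdim T v₀).mp hv₀ P hdlt ?_)
      have h0 : aeval T P = 0 := minpoly.aeval F T
      rw [h0, LinearMap.zero_apply]
    · exact heq
  have hdegPc : P.degree = (n : ℕ) := by
    rw [degree_eq_natDegree hp0, hdegP]
  have haeval_mul : ∀ (a b : F[X]) (w : V), (aeval T (a * b)) w = (aeval T a) ((aeval T b) w) :=
    fun a b w => by rw [map_mul]; rfl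
  -- annihilator of the cyclic vector
  have hann : ∀ x : F[X], (aeval T x) v₀ = 0 ↔ P ∣ x := by
    intro x
    have h0 : aeval T P = 0 := minpoly.aeval F T
    constructor
    · intro hx
      have hsub : x %ₘ P = x - P * (x /ₘ P) := eq_sub_of_add_eq (modByMonic_add_div x P)
      have hr : (aeval T (x %ₘ P)) v₀ = 0 := by
        rw [hsub, map_sub, LinearMap.sub_apply, hx, haeval_mul, h0, LinearMap.zero_apply,
          sub_zero]
      have hrd : (x %ₘ P).degree < (n : ℕ) := hdegPc ▸ degree_modByMonic_lt x hpmon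
      have hz := (cyc_iff_poly hn hdim T v₀).mp hv₀ _ hrd hr
      exact (modByMonic_eq_zero_iff_dvd hpmon).mp hz
    · rintro ⟨t, rfl⟩
      rw [haeval_mul, h0, LinearMap.zero_apply]
  -- surjectivity of evaluation at the cyclic vector
  have hsur : ∀ w : V, ∃ u : F[X], (aeval T u) v₀ = w := by
    intro w
    have hw : w ∈ span F (Set.range fun i : Fin n => (T ^ (i : ℕ)) v₀) := by
      rw [hv₀]; trivial
    obtain ⟨c, hc⟩ := (mem_span_range_iff_exists_fun F).mp hw
    exact ⟨Pc n c, by rw [aeval_Pc]; exact hc⟩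
  -- the polynomials H I
  set H : Finset (Fin k) → F[X] :=
    fun I => ∏ j : Fin k, f j ^ (e j - if j ∈ I then 1 else 0) with hHdef
  have hHmul : ∀ I : Finset (Fin k), H I * ∏ i ∈ I, f i = P := by
    intro I
    have h1 : ∏ i ∈ I, f i = ∏ j : Fin k, f j ^ (if j ∈ I then 1 else 0) := by
      rw [← Finset.prod_subset (Finset.subset_univ I)
        (fun j _ hj => by rw [if_neg hj, pow_zero])]
      exact Finset.prod_congr rfl fun j hj => by rw [if_pos hj, pow_one]
    rw [h1, hHdef, ← Finset.prod_mul_distrib, hmin]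
    refine Finset.prod_congr rfl fun j _ => ?_
    rw [← pow_add, Nat.sub_add_cancel]
    split
    · exact he j
    · exact Nat.zero_le _
  have hHmon : ∀ I, (H I).Monic := fun I =>
    monic_prod_of_monic _ _ fun j _ => (hf j).1.pow _
  have hHdvd : ∀ I J : Finset (Fin k), J ⊆ I → H I ∣ H J := by
    intro I J hJI
    refine Finset.prod_dvd_prod_of_dvd _ _ fun j _ => pow_dvd_pow _ ?_
    refine Nat.sub_le_sub_left ?_ _
    split
    · split
      · exact le_refl _
      · next h1 h2 => exact absurd (hJI h1) h2
    · exact Nat.zero_le _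
  -- basic facts about the f i
  have hfd : ∀ i, (f i).natDegree ≠ 0 := by
    intro i h0
    exact not_irreducible_one (eq_one_of_monic_natDegree_zero (hf i).1 h0 ▸ (hf i).2)
  have hf0 : ∀ i, f i ≠ 0 := fun i => (hf i).1.ne_zero
  have hcop : ∀ i j, i ≠ j → IsCoprime (f i) (f j) := by
    intro i j hij
    refine ((hf i).2.coprime_iff_not_dvd).mpr fun hdvd => ?_
    exact hij (hinj (eq_of_monic_of_associated (hf i).1 (hf j).1
      ((hf i).2.associated_of_dvd (hf j).2 hdvd)))
  -- kernels of the H I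
  have hkerH : ∀ (I : Finset (Fin k)) (w : V),
      w ∈ LinearMap.ker (aeval T (H I)) ↔
        ∀ i ∈ I, w ∈ LinearMap.ker (aeval T (H {i})) := by
    intro I w
    constructor
    · intro hw i hi
      obtain ⟨c, hc⟩ := hHdvd I {i} (Finset.singleton_subset_iff.mpr hi)
      rw [LinearMap.mem_ker, hc, mul_comm, haeval_mul, LinearMap.mem_ker.mp hw, map_zero]
    · intro hw
      obtain ⟨u, hu⟩ := hsur w
      have hfdvd : ∀ i ∈ I, f i ∣ u := by
        intro i hi
        have h1 : (aeval T (H {i} * u)) v₀ = 0 := by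
          rw [haeval_mul, hu]; exact LinearMap.mem_ker.mp (hw i hi)
        have h2 : P ∣ H {i} * u := (hann _).mp h1
        have h3 : H {i} * f i ∣ H {i} * u := by
          rw [show H {i} * f i = P from by rw [← hHmul {i}, Finset.prod_singleton]]
          exact h2
        exact (mul_dvd_mul_iff_left (hHmon {i}).ne_zero).mp h3
      have hprodvd : ∏ i ∈ I, f i ∣ u :=
        Finset.prod_dvd_of_coprime (fun i hi j hj hij => hcop i j hij) hfdvd
      obtain ⟨u', hu'⟩ := hprodvd
      rw [LinearMap.mem_ker, ← hu, ← haeval_mul]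
      apply (hann _).mpr
      refine ⟨u', ?_⟩
      rw [hu', ← mul_assoc, hHmul I]
  -- characterization of cyclic vectors
  have hcyc_iff : ∀ w : V,
      (span F (Set.range fun i : Fin n => (T ^ (i : ℕ)) w) = ⊤) ↔
        ∀ i : Fin k, w ∉ LinearMap.ker (aeval T (H {i})) := by
    intro w
    constructor
    · intro hcw i hi
      have hne : H {i} ≠ 0 := (hHmon {i}).ne_zero
      have hPi : H {i} * f i = P := by rw [← hHmul {i}, Finset.prod_singleton]
      have hdlt : (H {i}).natDegree < n := by
        have := congrArg natDegree hPi
        rw [natDegree_mul hne (hf0 i), hdegP] at this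
        have h1 := hfd i
        omega
      have hdlt' : (H {i}).degree < (n : ℕ) := (natDegree_lt_iff_degree_lt hne).mp hdlt
      exact hne ((cyc_iff_poly hn hdim T w).mp hcw _ hdlt' (LinearMap.mem_ker.mp hi))
    · intro hni
      rw [cyc_iff_poly hn hdim T w]
      intro x hxdeg hx
      by_contra hxne
      obtain ⟨u, hu⟩ := hsur w
      have hPxu : P ∣ x * u := by
        apply (hann _).mp
        rw [haeval_mul, hu]; exact hx
      have hfu : ∀ i, ¬ f i ∣ u := by
        intro i hdvd
        obtain ⟨u', hu'⟩ := hdvd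
        apply hni i
        rw [LinearMap.mem_ker, ← hu, ← haeval_mul]
        apply (hann _).mpr
        refine ⟨u', ?_⟩
        rw [hu', ← mul_assoc, show H {i} * f i = P from by rw [← hHmul {i}, Finset.prod_singleton]]
      have hcopPu : IsCoprime P u := by
        rw [hmin]
        exact IsCoprime.prod_left fun i _ =>
          (((hf i).2.coprime_iff_not_dvd).mpr (hfu i)).pow_left
      have hPx : P ∣ x := hcopPu.dvd_of_dvd_mul_right hPxu
      have := degree_le_of_dvd hPx hxne
      rw [hdegPc] at this
      exact absurd (lt_of_le_of_lt this hxdeg) (lt_irrefl _)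
  -- the two subtype counts
  set X := {w : V // span F (Set.range fun i : Fin n => (T ^ (i : ℕ)) w) = ⊤} with hX
  set Y := {W : Submodule F V // Module.finrank F W = 1 ∧
      DirectSum.IsInternal (fun i : Fin n => Submodule.map (T ^ (i : ℕ)) W)} with hY
  haveI : Finite (Submodule F V) :=
    Finite.of_injective (fun W : Submodule F V => (W : Set V)) SetLike.coe_injective
  letI : Fintype (Submodule F V) := Fintype.ofFinite _
  -- cyclic vectors are nonzero
  have hcyc_ne : ∀ w : V,
      (span F (Set.range fun i : Fin n => (T ^ (i : ℕ)) w) = ⊤) → w ≠ 0 := by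
    intro w hw hw0
    subst hw0
    haveI : Subsingleton V := by
      refine subsingleton_of_forall_eq 0 fun v => ?_
      have hv : v ∈ span F (Set.range fun i : Fin n => (T ^ (i : ℕ)) (0 : V)) := by
        rw [hw]; trivial
      have hle : span F (Set.range fun i : Fin n => (T ^ (i : ℕ)) (0 : V)) ≤ ⊥ :=
        span_le.mpr (by rintro _ ⟨i, rfl⟩; simp)
      simpa using hle hv
    rw [finrank_zero_of_subsingleton] at hdim
    omega
  -- scaling preserves cyclicity
  have hsmul : ∀ (c : F) (w : V), c ≠ 0 →
      (span F (Set.range fun i : Fin n => (T ^ (i : ℕ)) w) = ⊤) →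
      span F (Set.range fun i : Fin n => (T ^ (i : ℕ)) (c • w)) = ⊤ := by
    intro c w hc hcw
    rw [eq_top_iff, ← hcw]
    apply span_le.mpr
    rintro _ ⟨i, rfl⟩
    show (T ^ (i : ℕ)) w ∈ span F (Set.range fun j : Fin n => (T ^ (j : ℕ)) (c • w))
    have hsm : (T ^ (i : ℕ)) w = c⁻¹ • ((T ^ (i : ℕ)) (c • w)) := by
      rw [map_smul, smul_smul, inv_mul_cancel₀ hc, one_smul]
    rw [hsm]
    exact Submodule.smul_mem _ _ (subset_span ⟨i, rfl⟩)
  -- the key correspondence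
  have hL : ∀ W : Submodule F V,
      (Module.finrank F W = 1 ∧
        DirectSum.IsInternal (fun i : Fin n => Submodule.map (T ^ (i : ℕ)) W)) ↔
      ∃ w : V, w ≠ 0 ∧ W = span F {w} ∧
        span F (Set.range fun i : Fin n => (T ^ (i : ℕ)) w) = ⊤ := by
    intro W
    constructor
    · rintro ⟨h1, h2⟩
      obtain ⟨v, hv0, hv⟩ := finrank_eq_one_iff'.mp h1
      have hv0' : (v : V) ≠ 0 := fun h => hv0 (Subtype.ext h)
      have hWspan : W = span F {(v : V)} := by
        apply le_antisymm
        · intro x hx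
          obtain ⟨c, hc⟩ := hv ⟨x, hx⟩
          exact Submodule.mem_span_singleton.mpr ⟨c, congrArg Subtype.val hc⟩
        · exact span_le.mpr (Set.singleton_subset_iff.mpr v.2)
      refine ⟨(v : V), hv0', hWspan, ?_⟩
      have hmap : ∀ i : Fin n,
          Submodule.map (T ^ (i : ℕ)) W = span F {(T ^ (i : ℕ)) (v : V)} := by
        intro i
        conv_lhs => rw [hWspan]
        rw [Submodule.map_span, Set.image_singleton]
      have hsup := h2.submodule_iSup_eq_top
      rw [span_range_eq_iSup]
      simp_rw [← hmap]
      exact hsup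
    · rintro ⟨w, hw0, rfl, hcw⟩
      have hmap : ∀ i : Fin n,
          Submodule.map (T ^ (i : ℕ)) (span F {w}) = span F {(T ^ (i : ℕ)) w} := by
        intro i; rw [Submodule.map_span, Set.image_singleton]
      constructor
      · exact finrank_span_singleton hw0
      · rw [DirectSum.isInternal_submodule_iff_iSupIndep_and_iSup_eq_top]
        constructor
        · have hli := (cyc_iff_li hn hdim T w).mp hcw
          simp_rw [hmap]
          exact hli.iSupIndep_span_singleton
        · simp_rw [hmap]
          rw [← span_range_eq_iSup]
          exact hcw
  -- fiber counting : card X = card Y * (q - 1)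
  set π : X → Y := fun x =>
    ⟨span F {x.val}, (hL _).mpr ⟨x.val, hcyc_ne _ x.2, rfl, x.2⟩⟩ with hπ
  have hfiber : ∀ y : Y, Nat.card {x : X // π x = y} = Fintype.card F - 1 := by
    intro y
    obtain ⟨w₀, hw₀0, hWeq, hw₀cyc⟩ := (hL y.1).mp y.2
    set γ : {c : F // c ≠ 0} → {x : X // π x = y} := fun c =>
      ⟨⟨c.1 • w₀, hsmul c.1 w₀ c.2 hw₀cyc⟩, by
        apply Subtype.ext
        show span F {c.1 • w₀} = y.1
        rw [Submodule.span_singleton_smul_eq (isUnit_iff_ne_zero.mpr c.2) w₀, hWeq]⟩ with hγ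
    have hγinj : Function.Injective γ := by
      intro c c' hcc
      have h1 : c.1 • w₀ = c'.1 • w₀ :=
        congrArg (fun x => x.val.val) hcc
      have h2 : (c.1 - c'.1) • w₀ = 0 := by rw [sub_smul, h1, sub_self]
      rcases smul_eq_zero.mp h2 with h | h
      · exact Subtype.ext (sub_eq_zero.mp h)
      · exact absurd h hw₀0
    have hγsur : Function.Surjective γ := by
      rintro ⟨x, hx⟩
      have h1 : span F {x.val} = y.1 := congrArg Subtype.val hx
      have h2 : x.val ∈ span F {w₀} := by
        rw [← hWeq, ← h1]
        exact mem_span_singleton_self _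
      obtain ⟨c, hc⟩ := Submodule.mem_span_singleton.mp h2
      have hc0 : c ≠ 0 := by
        rintro rfl
        rw [zero_smul] at hc
        exact hcyc_ne _ x.2 hc.symm
      exact ⟨⟨c, hc0⟩, by apply Subtype.ext; apply Subtype.ext; exact hc⟩
    have := Nat.card_congr (Equiv.ofBijective γ ⟨hγinj, hγsur⟩)
    rw [← this, Nat.card_congr unitsEquivNeZero.symm, Nat.card_eq_fintype_card,
      Fintype.card_units]
  have hcardXY : Nat.card X = Nat.card Y * (Fintype.card F - 1) := by
    calc Nat.card X = Nat.card ((y : Y) × {x : X // π x = y}) :=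
          (Nat.card_congr (Equiv.sigmaFiberEquiv π)).symm
      _ = ∑ y : Y, Nat.card {x : X // π x = y} := by
          rw [Nat.card_eq_fintype_card, Fintype.card_sigma]
          exact Finset.sum_congr rfl fun y _ => (Nat.card_eq_fintype_card).symm
      _ = ∑ _y : Y, (Fintype.card F - 1) := Finset.sum_congr rfl fun y _ => hfiber y
      _ = Nat.card Y * (Fintype.card F - 1) := by
          rw [Finset.sum_const, smul_eq_mul, Nat.card_eq_fintype_card, Finset.card_univ]
  -- counting cyclic vectors with inclusion-exclusion
  have hcardker : ∀ I : Finset (Fin k),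
      Nat.card (LinearMap.ker (aeval T (H I))) = Fintype.card F ^ (H I).natDegree := by
    intro I
    have hs0 : (∏ i ∈ I, f i) ≠ 0 :=
      (monic_prod_of_monic _ _ fun i _ => (hf i).1).ne_zero
    refine card_ker T v₀ hsur (H I) (∏ i ∈ I, f i) (hHmon I) hs0 fun x => ?_
    have hPI : (∏ i ∈ I, f i) * H I = P := by rw [mul_comm]; exact hHmul I
    rw [hann x, ← hPI]
  set χ : Fin k → V → ℚ :=
    fun i w => if w ∈ LinearMap.ker (aeval T (H {i})) then 1 else 0 with hχ
  have hprodI : ∀ (I : Finset (Fin k)) (w : V),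
      (∏ i ∈ I, χ i w) = if w ∈ LinearMap.ker (aeval T (H I)) then 1 else 0 := by
    intro I w
    by_cases hw : w ∈ LinearMap.ker (aeval T (H I))
    · rw [if_pos hw]
      exact Finset.prod_eq_one fun i hi => by
        simp only [hχ]
        rw [if_pos ((hkerH I w).mp hw i hi)]
    · rw [if_neg hw]
      have hex : ∃ i ∈ I, w ∉ LinearMap.ker (aeval T (H {i})) := by
        by_contra hc
        push_neg at hc
        exact hw ((hkerH I w).mpr hc)
      obtain ⟨i, hi, hni⟩ := hex
      exact Finset.prod_eq_zero hi (by simp only [hχ]; rw [if_neg hni])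
  have hsum1 : ∑ w : V, ∏ i : Fin k, ((1 : ℚ) - χ i w) = (Nat.card X : ℚ) := by
    have hterm : ∀ w : V, (∏ i : Fin k, ((1 : ℚ) - χ i w)) =
        if (span F (Set.range fun i : Fin n => (T ^ (i : ℕ)) w) = ⊤) then 1 else 0 := by
      intro w
      by_cases hw : span F (Set.range fun i : Fin n => (T ^ (i : ℕ)) w) = ⊤
      · rw [if_pos hw]
        refine Finset.prod_eq_one fun i _ => ?_
        have hni := (hcyc_iff w).mp hw i
        simp only [hχ]
        rw [if_neg hni, sub_zero]
      · rw [if_neg hw]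
        have hex : ∃ i : Fin k, w ∈ LinearMap.ker (aeval T (H {i})) := by
          by_contra hc
          push_neg at hc
          exact hw ((hcyc_iff w).mpr hc)
        obtain ⟨i, hi⟩ := hex
        refine Finset.prod_eq_zero (Finset.mem_univ i) ?_
        simp only [hχ]
        rw [if_pos hi, sub_self]
    rw [Finset.sum_congr rfl fun w _ => hterm w, Finset.sum_boole,
      Nat.card_eq_fintype_card, Fintype.card_subtype]
  have hsum2 : ∑ w : V, ∏ i : Fin k, ((1 : ℚ) - χ i w) =
      ∑ I ∈ (Finset.univ : Finset (Fin k)).powerset,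
        (-1 : ℚ) ^ I.card * (Fintype.card F : ℚ) ^ (H I).natDegree := by
    have hw1 : ∀ w : V, ∏ i : Fin k, ((1 : ℚ) - χ i w) =
        ∑ I ∈ (Finset.univ : Finset (Fin k)).powerset,
          (-1 : ℚ) ^ I.card * (if w ∈ LinearMap.ker (aeval T (H I)) then 1 else 0) := by
      intro w
      have hr : ∀ i : Fin k, (1 : ℚ) - χ i w = (- χ i w) + 1 := fun i => by ring
      rw [Finset.prod_congr rfl fun i _ => hr i, Finset.prod_add]
      refine Finset.sum_congr rfl fun I _ => ?_
      rw [Finset.prod_const_one, mul_one]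
      calc ∏ i ∈ I, (- χ i w) = ∏ i ∈ I, ((-1) * χ i w) := by
            exact Finset.prod_congr rfl fun i _ => by ring
        _ = (-1 : ℚ) ^ I.card * ∏ i ∈ I, χ i w := by
            rw [Finset.prod_mul_distrib, Finset.prod_const]
        _ = (-1 : ℚ) ^ I.card * (if w ∈ LinearMap.ker (aeval T (H I)) then 1 else 0) := by
            rw [hprodI I w]
    rw [Finset.sum_congr rfl fun w _ => hw1 w, Finset.sum_comm]
    refine Finset.sum_congr rfl fun I _ => ?_
    rw [← Finset.mul_sum, Finset.sum_boole]
    congr 1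
    have hck := hcardker I
    rw [Nat.card_eq_fintype_card] at hck
    rw [← Fintype.card_subtype]
    exact_mod_cast hck
  -- degrees add up
  have hdegI : ∀ I : Finset (Fin k),
      (H I).natDegree + ∑ i ∈ I, (f i).natDegree = n := by
    intro I
    have hs0 : ∀ i ∈ I, f i ≠ 0 := fun i _ => hf0 i
    have h1 := congrArg natDegree (hHmul I)
    rw [natDegree_mul (hHmon I).ne_zero
      (monic_prod_of_monic _ _ fun i _ => (hf i).1).ne_zero, natDegree_prod _ _ hs0,
      hdegP] at h1
    exact h1
  -- the right-hand side expansion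
  have hq0 : (Fintype.card F : ℚ) ≠ 0 := Nat.cast_ne_zero.mpr Fintype.card_ne_zero
  have hRHS : (Fintype.card F : ℚ) ^ n *
      ∏ i : Fin k, (1 - ((Fintype.card F : ℚ) ^ (f i).natDegree)⁻¹) =
      ∑ I ∈ (Finset.univ : Finset (Fin k)).powerset,
        (-1 : ℚ) ^ I.card * (Fintype.card F : ℚ) ^ (H I).natDegree := by
    have hr : ∀ i : Fin k, (1 : ℚ) - ((Fintype.card F : ℚ) ^ (f i).natDegree)⁻¹ =
        (- ((Fintype.card F : ℚ) ^ (f i).natDegree)⁻¹) + 1 := fun i => by ring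
    rw [Finset.prod_congr rfl fun i _ => hr i, Finset.prod_add, Finset.mul_sum]
    refine Finset.sum_congr rfl fun I _ => ?_
    rw [Finset.prod_const_one, mul_one]
    have h1 : ∏ i ∈ I, (- ((Fintype.card F : ℚ) ^ (f i).natDegree)⁻¹) =
        (-1 : ℚ) ^ I.card * ((Fintype.card F : ℚ) ^ (∑ i ∈ I, (f i).natDegree))⁻¹ := by
      calc ∏ i ∈ I, (- ((Fintype.card F : ℚ) ^ (f i).natDegree)⁻¹)
          = ∏ i ∈ I, ((-1) * ((Fintype.card F : ℚ) ^ (f i).natDegree)⁻¹) :=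
            Finset.prod_congr rfl fun i _ => by ring
        _ = (-1 : ℚ) ^ I.card * ∏ i ∈ I, ((Fintype.card F : ℚ) ^ (f i).natDegree)⁻¹ := by
            rw [Finset.prod_mul_distrib, Finset.prod_const]
        _ = (-1 : ℚ) ^ I.card * ((Fintype.card F : ℚ) ^ (∑ i ∈ I, (f i).natDegree))⁻¹ := by
            rw [Finset.prod_inv_distrib, Finset.prod_pow_eq_pow_sum]
    rw [h1, ← hdegI I, pow_add]
    field_simp
  -- final assembly
  have hq1 : 1 < Fintype.card F := Fintype.one_lt_card
  have hA : (Nat.card X : ℚ) = (Nat.card Y : ℚ) * ((Fintype.card F : ℚ) - 1) := by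
    rw [hcardXY]
    push_cast [Nat.cast_sub (le_of_lt hq1)]
    ring
  have hB : (Nat.card Y : ℚ) * ((Fintype.card F : ℚ) - 1) =
      (Fintype.card F : ℚ) ^ n *
        ∏ i : Fin k, (1 - ((Fintype.card F : ℚ) ^ (f i).natDegree)⁻¹) := by
    rw [← hA, ← hsum1, hsum2, ← hRHS]
  have hne : (Fintype.card F : ℚ) - 1 ≠ 0 := by
    have : (1 : ℚ) < (Fintype.card F : ℚ) := by exact_mod_cast hq1
    linarith
  rw [div_mul_eq_mul_div, eq_div_iff hne]
  exact hB
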